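/- arXiv:1802.08856 — 3 statements merged into one kernel-verified Lean document; each statement's English description precedes it below -/
import Mathlib

section
/- Define r_n = ∫_0^1 x^n(1−x)^n/(1+x)^{n+1} dx for natural numbers n. Then for every integer n ≥ 1 the second-order recurrence (n+1)·r_{n+1} − 3(2n+1)·r_n + n·r_{n−1} = 0 holds. -/
/-- The classical rational approximations to `log 2`:
`r_n = ∫_0^1 x^n (1−x)^n / (1+x)^{n+1} dx`. -/
noncomputable def rLog2 (n : ℕ) : ℝ := ∫ x in (0:ℝ)..1, x ^ n * (1 - x) ^ n / (1 + x) ^ (n + 1)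

private noncomputable def gAux (m : ℕ) (x : ℝ) : ℝ :=
  ((m : ℝ) + 2) * (x ^ (m + 2) * (1 - x) ^ (m + 2) / (1 + x) ^ (m + 3))
    - 3 * (2 * (m : ℝ) + 3) * (x ^ (m + 1) * (1 - x) ^ (m + 1) / (1 + x) ^ (m + 2))
    + ((m : ℝ) + 1) * (x ^ m * (1 - x) ^ m / (1 + x) ^ (m + 1))

private lemma contOn_f (k : ℕ) :
    ContinuousOn (fun x : ℝ => x ^ k * (1 - x) ^ k / (1 + x) ^ (k + 1)) (Set.uIcc 0 1) := by
  apply ContinuousOn.div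
  · fun_prop
  · fun_prop
  · intro x hx
    rw [Set.uIcc_of_le (by norm_num : (0:ℝ) ≤ 1)] at hx
    have : (0:ℝ) < 1 + x := by linarith [hx.1]
    positivity

private lemma deriv_key (m : ℕ) (x : ℝ) (hx : x ∈ Set.uIcc (0:ℝ) 1) :
    HasDerivAt (fun x : ℝ => x ^ (m + 1) * (1 - x) ^ (m + 1) * (1 - 2 * x - x ^ 2)
      / (1 + x) ^ (m + 2)) (gAux m x) x := by
  rw [Set.uIcc_of_le (by norm_num : (0:ℝ) ≤ 1)] at hx
  have hxpos : (0:ℝ) < 1 + x := by linarith [hx.1]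
  have hne : (1 + x : ℝ) ≠ 0 := ne_of_gt hxpos
  have h1 : HasDerivAt (fun x : ℝ => x ^ (m + 1)) (((m : ℝ) + 1) * x ^ m) x := by
    simpa using hasDerivAt_pow (m + 1) x
  have h2 : HasDerivAt (fun x : ℝ => (1 - x) ^ (m + 1)) (-(((m : ℝ) + 1) * (1 - x) ^ m)) x := by
    have := (hasDerivAt_pow (m + 1) (1 - x)).comp x
      ((hasDerivAt_id x).const_sub 1)
    simpa [Function.comp_def] using this
  have h3 : HasDerivAt (fun x : ℝ => 1 - 2 * x - x ^ 2) (-2 - 2 * x) x := by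
    have := (((hasDerivAt_id x).const_mul 2).const_sub 1).sub (hasDerivAt_pow 2 x)
    exact this.congr_deriv (by norm_num)
  have h4 : HasDerivAt (fun x : ℝ => (1 + x) ^ (m + 2)) (((m : ℝ) + 2) * (1 + x) ^ (m + 1)) x := by
    have := (hasDerivAt_pow (m + 2) (1 + x)).comp x ((hasDerivAt_id x).const_add 1)
    simpa [Function.comp_def] using this
  have hD := ((h1.mul h2).mul h3).div h4 (pow_ne_zero _ hne)
  convert hD using 1
  · rfl
  · rfl
  · rfl
  unfold gAux
  simp only [Pi.mul_apply]
  field_simp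
  ring

theorem stmt8 (n : ℕ) (hn : 1 ≤ n) :
    ((n : ℝ) + 1) * rLog2 (n + 1) - 3 * (2 * (n : ℝ) + 1) * rLog2 n + (n : ℝ) * rLog2 (n - 1) = 0 := by
  obtain ⟨m, rfl⟩ : ∃ m, n = m + 1 := ⟨n - 1, (Nat.succ_pred_eq_of_pos hn).symm⟩
  have hint : ∀ k : ℕ, IntervalIntegrable
      (fun x : ℝ => x ^ k * (1 - x) ^ k / (1 + x) ^ (k + 1)) MeasureTheory.volume 0 1 :=
    fun k => (contOn_f k).intervalIntegrable
  have hgint : IntervalIntegrable (gAux m) MeasureTheory.volume 0 1 := by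
    unfold gAux
    exact (((hint (m+2)).const_mul _).sub ((hint (m+1)).const_mul _)).add
      ((hint m).const_mul _)
  have hFTC : (∫ x in (0:ℝ)..1, gAux m x) = 0 := by
    rw [intervalIntegral.integral_eq_sub_of_hasDerivAt (fun x hx => deriv_key m x hx) hgint]
    norm_num
  have hsplit : (∫ x in (0:ℝ)..1, gAux m x)
      = ((m : ℝ) + 2) * rLog2 (m + 2) - 3 * (2 * (m : ℝ) + 3) * rLog2 (m + 1)
        + ((m : ℝ) + 1) * rLog2 m := by
    unfold gAux rLog2
    rw [intervalIntegral.integral_add (((hint (m+2)).const_mul _).sub ((hint (m+1)).const_mul _))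
      ((hint m).const_mul _),
      intervalIntegral.integral_sub ((hint (m+2)).const_mul _) ((hint (m+1)).const_mul _),
      intervalIntegral.integral_const_mul, intervalIntegral.integral_const_mul,
      intervalIntegral.integral_const_mul]
  have hm : m + 1 - 1 = m := rfl
  rw [hm]
  push_cast
  have := hsplit.symm.trans hFTC
  linarith [this]
end

section
/- Let s ≥ 1 and n ≥ 0 be integers and let real numbers a_{i,k} (1 ≤ i ≤ s, 0 ≤ k ≤ n) be given, and set R(t) = ∑_{i=1}^{s} ∑_{k=0}^{n} a_{i,k}/(t+k)^i. If R(t) = R(−n−t) for every real t not belonging to {0, −1, −2, …, −n}, then a_{i,n−k} = (−1)^i · a_{i,k} for all 1 ≤ i ≤ s and 0 ≤ k ≤ n. -/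
open Filter Topology Finset

lemma aux_zero (n : ℕ) : ∀ (s : ℕ) (b : ℕ → ℕ → ℝ),
    (∀ t : ℝ, (∀ k ∈ Finset.range (n + 1), t + (k : ℝ) ≠ 0) →
      ∑ i ∈ Finset.Icc 1 s, ∑ k ∈ Finset.range (n + 1), b i k / (t + (k : ℝ)) ^ i = 0) →
    ∀ i ∈ Finset.Icc 1 s, ∀ k ∈ Finset.range (n + 1), b i k = 0 := by
  intro s
  induction s with
  | zero =>
    intro b _ i hi
    simp at hi
  | succ s ih =>
    intro b hb
    have htop : ∀ k₀ ∈ Finset.range (n + 1), b (s + 1) k₀ = 0 := by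
      intro k₀ hk₀
      set ε : ℕ → ℝ := fun j => 1 / (j + 2 : ℝ) with hεdef
      have hεpos : ∀ j, 0 < ε j := by
        intro j; positivity
      have hεlt : ∀ j, ε j < 1 := by
        intro j
        rw [hεdef]
        rw [div_lt_one (by positivity)]
        have : (0:ℝ) ≤ (j:ℝ) := Nat.cast_nonneg j
        linarith
      have hεlim : Tendsto ε atTop (𝓝 0) := by
        have h1 : Tendsto (fun j : ℕ => ((j:ℝ) + 2)) atTop atTop := by
          apply tendsto_atTop_add_const_right
          exact tendsto_natCast_atTop_atTop
        simpa [hεdef, Pi.inv_def] using h1.inv_tendsto_atTop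
      set t : ℕ → ℝ := fun j => -(k₀ : ℝ) + ε j with htdef
      have htk₀ : ∀ j, t j + (k₀ : ℝ) = ε j := by intro j; rw [htdef]; ring
      have htmem : ∀ j, ∀ k ∈ Finset.range (n + 1), t j + (k : ℝ) ≠ 0 := by
        intro j k hk
        by_cases hkk : k = k₀
        · subst hkk; rw [htk₀]; exact ne_of_gt (hεpos j)
        · rw [htdef]
          intro hcon
          have hcon' : -(k₀ : ℝ) + ε j + (k : ℝ) = 0 := hcon
          have h1 : (k₀ : ℝ) - (k : ℝ) = ε j := by linarith
          have h2 : (0:ℝ) < (k₀ : ℝ) - (k : ℝ) := h1 ▸ hεpos j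
          have h3 : (k₀ : ℝ) - (k : ℝ) < 1 := h1 ▸ hεlt j
          have : k < k₀ := by exact_mod_cast (by linarith : (k:ℝ) < (k₀:ℝ))
          have h5 : (k₀ : ℝ) < (k : ℝ) + 1 := by linarith
          have : k₀ < k + 1 := by exact_mod_cast h5
          omega
      have hzero : ∀ j, (ε j) ^ (s + 1) *
          (∑ i ∈ Finset.Icc 1 (s + 1), ∑ k ∈ Finset.range (n + 1),
            b i k / (t j + (k : ℝ)) ^ i) = 0 := by
        intro j; rw [hb (t j) (htmem j), mul_zero]
      -- the limit computation
      have hterm : ∀ i ∈ Finset.Icc 1 (s + 1), ∀ k ∈ Finset.range (n + 1),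
          Tendsto (fun j => (ε j) ^ (s + 1) * (b i k / (t j + (k : ℝ)) ^ i)) atTop
            (𝓝 (if k = k₀ ∧ i = s + 1 then b (s + 1) k₀ else 0)) := by
        intro i hi k hk
        simp only [Finset.mem_Icc] at hi
        by_cases hkk : k = k₀
        · subst hkk
          have heq : ∀ j, (ε j) ^ (s + 1) * (b i k / (t j + (k : ℝ)) ^ i)
              = b i k * (ε j) ^ (s + 1 - i) := by
            intro j
            rw [htk₀, pow_sub₀ _ (ne_of_gt (hεpos j)) hi.2]
            field_simp
          by_cases his : i = s + 1
          · subst his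
            simp only [Nat.sub_self, pow_zero, mul_one] at heq
            rw [if_pos ⟨rfl, rfl⟩]
            exact tendsto_const_nhds.congr (fun j => (heq j).symm)
          · have h2 : Tendsto (fun j => b i k * (ε j) ^ (s + 1 - i)) atTop (𝓝 0) := by
              have h3 := (hεlim.pow (s + 1 - i))
              rw [zero_pow (by omega)] at h3
              simpa using h3.const_mul (b i k)
            rw [if_neg (by tauto)]
            exact h2.congr (fun j => (heq j).symm)
        · have hd : Tendsto (fun j => t j + (k : ℝ)) atTop (𝓝 ((k : ℝ) - (k₀ : ℝ))) := by
            have h := (hεlim.const_add (-(k₀:ℝ))).add_const (k : ℝ)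
            convert h using 2
            ring
          have hne : ((k:ℝ) - (k₀:ℝ)) ≠ 0 := sub_ne_zero.mpr (by exact_mod_cast hkk)
          have hfrac : Tendsto (fun j => b i k / (t j + (k:ℝ)) ^ i) atTop
              (𝓝 (b i k / ((k:ℝ) - (k₀:ℝ)) ^ i)) :=
            tendsto_const_nhds.div (hd.pow i) (pow_ne_zero i hne)
          have hpow : Tendsto (fun j => (ε j) ^ (s + 1)) atTop (𝓝 0) := by
            have h3 := hεlim.pow (s + 1)
            rw [zero_pow (by omega)] at h3
            exact h3
          have hmul := hpow.mul hfrac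
          rw [if_neg (by tauto)]
          simpa using hmul
      have hsum : Tendsto (fun j => ∑ i ∈ Finset.Icc 1 (s + 1), ∑ k ∈ Finset.range (n + 1),
            (ε j) ^ (s + 1) * (b i k / (t j + (k : ℝ)) ^ i)) atTop
          (𝓝 (∑ i ∈ Finset.Icc 1 (s + 1), ∑ k ∈ Finset.range (n + 1),
            if k = k₀ ∧ i = s + 1 then b (s + 1) k₀ else 0)) :=
        tendsto_finset_sum _ (fun i hi => tendsto_finset_sum _ (fun k hk => hterm i hi k hk))
      have hval : (∑ i ∈ Finset.Icc 1 (s + 1), ∑ k ∈ Finset.range (n + 1),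
            if k = k₀ ∧ i = s + 1 then b (s + 1) k₀ else 0) = b (s + 1) k₀ := by
        have hinner : ∀ i ∈ Finset.Icc 1 (s + 1),
            (∑ k ∈ Finset.range (n + 1), if k = k₀ ∧ i = s + 1 then b (s + 1) k₀ else 0)
            = if i = s + 1 then b (s + 1) k₀ else 0 := by
          intro i _
          by_cases his : i = s + 1
          · simp [his, Finset.sum_ite_eq', hk₀]
          · simp [his]
        rw [Finset.sum_congr rfl hinner]
        simp [Finset.sum_ite_eq', Finset.mem_Icc]
      have hlim : Tendsto (fun j => (ε j) ^ (s + 1) *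
          (∑ i ∈ Finset.Icc 1 (s + 1), ∑ k ∈ Finset.range (n + 1),
            b i k / (t j + (k : ℝ)) ^ i)) atTop (𝓝 (b (s + 1) k₀)) := by
        rw [hval] at hsum
        exact hsum.congr (fun j => by simp [Finset.mul_sum])
      have h0 : Tendsto (fun j => (ε j) ^ (s + 1) *
          (∑ i ∈ Finset.Icc 1 (s + 1), ∑ k ∈ Finset.range (n + 1),
            b i k / (t j + (k : ℝ)) ^ i)) atTop (𝓝 0) :=
        tendsto_const_nhds.congr (fun j => (hzero j).symm)
      exact (tendsto_nhds_unique h0 hlim).symm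
    have hrest : ∀ t : ℝ, (∀ k ∈ Finset.range (n + 1), t + (k : ℝ) ≠ 0) →
        ∑ i ∈ Finset.Icc 1 s, ∑ k ∈ Finset.range (n + 1), b i k / (t + (k : ℝ)) ^ i = 0 := by
      intro t ht
      have h := hb t ht
      rw [Finset.sum_Icc_succ_top (by omega : 1 ≤ s + 1)] at h
      have h2 : ∑ k ∈ Finset.range (n + 1), b (s + 1) k / (t + (k : ℝ)) ^ (s + 1) = 0 :=
        Finset.sum_eq_zero (fun k hk => by rw [htop k hk]; simp)
      rw [h2, add_zero] at h
      exact h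
    intro i hi k hk
    simp only [Finset.mem_Icc] at hi
    by_cases his : i = s + 1
    · subst his; exact htop k hk
    · exact ih b hrest i (Finset.mem_Icc.mpr ⟨hi.1, by omega⟩) k hk

/-- The rational function `R(t) = ∑_{i=1}^s ∑_{k=0}^n a_{i,k}/(t+k)^i`. -/
noncomputable def Rfun (s n : ℕ) (a : ℕ → ℕ → ℝ) (t : ℝ) : ℝ :=
  ∑ i ∈ Finset.Icc 1 s, ∑ k ∈ Finset.range (n + 1), a i k / (t + (k : ℝ)) ^ i

theorem stmt12 (s n : ℕ) (hs : 1 ≤ s) (a : ℕ → ℕ → ℝ)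
    (hsym : ∀ t : ℝ, (∀ k ∈ Finset.range (n + 1), t + (k : ℝ) ≠ 0) →
      Rfun s n a t = Rfun s n a (-(n : ℝ) - t)) :
    ∀ i ∈ Finset.Icc 1 s, ∀ k ∈ Finset.range (n + 1),
      a i (n - k) = (-1 : ℝ) ^ i * a i k := by
  set b : ℕ → ℕ → ℝ := fun i k => a i k - (-1 : ℝ) ^ i * a i (n - k) with hbdef
  have key : ∀ t : ℝ, (∀ k ∈ Finset.range (n + 1), t + (k : ℝ) ≠ 0) →
      ∑ i ∈ Finset.Icc 1 s, ∑ k ∈ Finset.range (n + 1), b i k / (t + (k : ℝ)) ^ i = 0 := by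
    intro t ht
    have h := hsym t ht
    unfold Rfun at h
    have hre : ∀ i ∈ Finset.Icc 1 s,
        ∑ k ∈ Finset.range (n + 1), a i k / (-(n : ℝ) - t + (k : ℝ)) ^ i
        = ∑ k ∈ Finset.range (n + 1), ((-1 : ℝ) ^ i * a i (n - k)) / (t + (k : ℝ)) ^ i := by
      intro i _
      rw [← Finset.sum_range_reflect]
      apply Finset.sum_congr rfl
      intro k hk
      have hkn : k ≤ n := by
        have := Finset.mem_range.mp hk; omega
      have hcast : ((n + 1 - 1 - k : ℕ) : ℝ) = (n : ℝ) - (k : ℝ) := by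
        have : n + 1 - 1 - k = n - k := by omega
        rw [this, Nat.cast_sub hkn]
      have harg : -(n : ℝ) - t + ((n + 1 - 1 - k : ℕ) : ℝ) = -(t + (k : ℝ)) := by
        rw [hcast]; ring
      have hidx : n + 1 - 1 - k = n - k := by omega
      rw [harg, hidx]
      rw [neg_pow]
      rw [div_mul_eq_div_div_swap]
      have hinv : ((-1 : ℝ) ^ i)⁻¹ = (-1 : ℝ) ^ i := by
        rw [← inv_pow]; norm_num
      rw [div_eq_mul_inv (a i (n - k) / (t + (k:ℝ)) ^ i) ((-1 : ℝ) ^ i), hinv]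
      ring
    rw [Finset.sum_congr rfl hre] at h
    have : ∑ i ∈ Finset.Icc 1 s, ∑ k ∈ Finset.range (n + 1), b i k / (t + (k : ℝ)) ^ i
        = ∑ i ∈ Finset.Icc 1 s, ∑ k ∈ Finset.range (n + 1), a i k / (t + (k : ℝ)) ^ i
        - ∑ i ∈ Finset.Icc 1 s, ∑ k ∈ Finset.range (n + 1),
            ((-1 : ℝ) ^ i * a i (n - k)) / (t + (k : ℝ)) ^ i := by
      rw [← Finset.sum_sub_distrib]
      apply Finset.sum_congr rfl
      intro i _
      rw [← Finset.sum_sub_distrib]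
      apply Finset.sum_congr rfl
      intro k _
      rw [hbdef]
      rw [sub_div]
    rw [this, h]
    ring
  have hb0 := aux_zero n s b key
  intro i hi k hk
  have h := hb0 i hi k hk
  have h1 : (-1 : ℝ) ^ i * (-1 : ℝ) ^ i = 1 := by
    rw [← mul_pow]; norm_num
  simp only [hbdef] at h
  have h2 : a i k = (-1 : ℝ) ^ i * a i (n - k) := by linarith
  calc a i (n - k) = ((-1 : ℝ) ^ i * (-1 : ℝ) ^ i) * a i (n - k) := by rw [h1, one_mul]
    _ = (-1 : ℝ) ^ i * ((-1 : ℝ) ^ i * a i (n - k)) := by ring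
    _ = (-1 : ℝ) ^ i * a i k := by rw [← h2]
end

section
/- The following two series evaluations hold: ∑_{t=1}^∞ 1/(t−1/2)^4 = π^4/6, and ∑_{t=1}^∞ (128/3)·(t−1)·t·(t+1)·(t+2) / [(t−1/2)^4·(t+1/2)^4·(t+3/2)^4] = (19/6)·π^4 − (125/4)·π^2. -/
set_option maxHeartbeats 800000

open Real Filter Finset

-- telescoping
lemma my_telescope {g : ℕ → ℝ} (h0 : Tendsto g atTop (nhds 0)) (hmono : Antitone g) :
    HasSum (fun n => g n - g (n + 1)) (g 0) := by
  have hnn : ∀ n, 0 ≤ g n - g (n + 1) := fun n =>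
    sub_nonneg.2 (hmono (Nat.le_succ n))
  have hps : ∀ N, ∑ n ∈ range N, (g n - g (n + 1)) = g 0 - g N := fun N =>
    Finset.sum_range_sub' g N
  have hgnn : ∀ n, 0 ≤ g n := fun n => hmono.le_of_tendsto h0 n
  have hsumm : Summable (fun n => g n - g (n + 1)) := by
    apply summable_of_sum_range_le hnn (c := g 0)
    intro N; rw [hps]; linarith [hgnn N]
  have h1 := hsumm.hasSum.tendsto_sum_nat
  have h2 : Tendsto (fun N => ∑ n ∈ range N, (g n - g (n + 1))) atTop (nhds (g 0)) := by
    simp only [hps]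
    simpa using tendsto_const_nhds.sub h0
  have heq := tendsto_nhds_unique h1 h2
  exact heq ▸ hsumm.hasSum

lemma tendsto_inv_shift_pow (c : ℝ) (hc : 0 < c) (k : ℕ) (hk : k ≠ 0) :
    Tendsto (fun t : ℕ => 1 / ((t : ℝ) + c) ^ k) atTop (nhds 0) := by
  have h1 : Tendsto (fun t : ℕ => ((t : ℝ) + c) ^ k) atTop atTop :=
    (tendsto_pow_atTop hk).comp (tendsto_atTop_add_const_right _ c tendsto_natCast_atTop_atTop)
  simpa [one_div, Pi.inv_def] using h1.inv_tendsto_atTop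

lemma antitone_inv_shift_pow (c : ℝ) (hc : 0 < c) (k : ℕ) :
    Antitone (fun t : ℕ => 1 / ((t : ℝ) + c) ^ k) := by
  intro a b hab
  have hab' : (a : ℝ) ≤ b := by exact_mod_cast hab
  exact one_div_le_one_div_of_le (by positivity) (pow_le_pow_left₀ (by positivity) (by linarith) k)

-- odd zeta values shifted: sums over t of 1/(t+1/2)^k
lemma hS4 : HasSum (fun t : ℕ => 1 / ((t : ℝ) + 1 / 2) ^ 4) (π ^ 4 / 6) := by
  have h4 := hasSum_zeta_four
  have heven : HasSum (fun k : ℕ => 1 / ((2 * k : ℕ) : ℝ) ^ 4) (π ^ 4 / 1440) := by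
    have := h4.mul_left (1 / 16)
    have he : (fun n : ℕ => (1 / 16 : ℝ) * (1 / (n : ℝ) ^ 4)) =
        (fun n : ℕ => 1 / ((2 * n : ℕ) : ℝ) ^ 4) := by
      funext n; push_cast
      rw [mul_pow]
      rw [one_div, one_div, one_div, mul_inv]
      norm_num
    rw [he] at this
    convert this using 1; rfl; ring
  have hodds : Summable (fun k : ℕ => 1 / ((2 * k + 1 : ℕ) : ℝ) ^ 4) :=
    h4.summable.comp_injective (fun a b h => by omega)
  have htot : HasSum (fun n : ℕ => 1 / (n : ℝ) ^ 4)
      (π ^ 4 / 1440 + ∑' k : ℕ, 1 / ((2 * k + 1 : ℕ) : ℝ) ^ 4) :=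
    HasSum.even_add_odd heven hodds.hasSum
  have huniq := h4.unique htot
  have hT : (∑' k : ℕ, 1 / ((2 * k + 1 : ℕ) : ℝ) ^ 4) = π ^ 4 / 96 := by linarith
  have hO : HasSum (fun k : ℕ => 1 / ((2 * k + 1 : ℕ) : ℝ) ^ 4) (π ^ 4 / 96) := by
    rw [← hT]; exact hodds.hasSum
  have := hO.mul_left 16
  have he : (fun k : ℕ => (16 : ℝ) * (1 / ((2 * k + 1 : ℕ) : ℝ) ^ 4)) =
      (fun t : ℕ => 1 / ((t : ℝ) + 1 / 2) ^ 4) := by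
    funext t
    have h1 : (t : ℝ) + 1 / 2 ≠ 0 := by positivity
    have h2 : ((2 * t + 1 : ℕ) : ℝ) ≠ 0 := by positivity
    push_cast at h2 ⊢
    field_simp
    ring
  rw [he] at this
  convert this using 1; rfl; ring

lemma hS2 : HasSum (fun t : ℕ => 1 / ((t : ℝ) + 1 / 2) ^ 2) (π ^ 2 / 2) := by
  have h2s := hasSum_zeta_two
  have heven : HasSum (fun k : ℕ => 1 / ((2 * k : ℕ) : ℝ) ^ 2) (π ^ 2 / 24) := by
    have := h2s.mul_left (1 / 4)
    have he : (fun n : ℕ => (1 / 4 : ℝ) * (1 / (n : ℝ) ^ 2)) =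
        (fun n : ℕ => 1 / ((2 * n : ℕ) : ℝ) ^ 2) := by
      funext n; push_cast
      rw [mul_pow, one_div, one_div, one_div, mul_inv]
      norm_num
    rw [he] at this
    convert this using 1; rfl; ring
  have hodds : Summable (fun k : ℕ => 1 / ((2 * k + 1 : ℕ) : ℝ) ^ 2) :=
    h2s.summable.comp_injective (fun a b h => by omega)
  have htot : HasSum (fun n : ℕ => 1 / (n : ℝ) ^ 2)
      (π ^ 2 / 24 + ∑' k : ℕ, 1 / ((2 * k + 1 : ℕ) : ℝ) ^ 2) :=
    HasSum.even_add_odd heven hodds.hasSum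
  have huniq := h2s.unique htot
  have hT : (∑' k : ℕ, 1 / ((2 * k + 1 : ℕ) : ℝ) ^ 2) = π ^ 2 / 8 := by linarith
  have hO : HasSum (fun k : ℕ => 1 / ((2 * k + 1 : ℕ) : ℝ) ^ 2) (π ^ 2 / 8) := by
    rw [← hT]; exact hodds.hasSum
  have := hO.mul_left 4
  have he : (fun k : ℕ => (4 : ℝ) * (1 / ((2 * k + 1 : ℕ) : ℝ) ^ 2)) =
      (fun t : ℕ => 1 / ((t : ℝ) + 1 / 2) ^ 2) := by
    funext t
    have h1 : (t : ℝ) + 1 / 2 ≠ 0 := by positivity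
    have h2 : ((2 * t + 1 : ℕ) : ℝ) ≠ 0 := by positivity
    push_cast at h2 ⊢
    field_simp
    ring
  rw [he] at this
  convert this using 1; rfl; ring

lemma tele (c : ℝ) (hc : 0 < c) (k : ℕ) (hk : k ≠ 0) :
    HasSum (fun n : ℕ => 1 / ((n : ℝ) + c) ^ k - 1 / ((n : ℝ) + 1 + c) ^ k) (1 / c ^ k) := by
  have h := my_telescope (g := fun n : ℕ => 1 / ((n : ℝ) + c) ^ k)
    (tendsto_inv_shift_pow c hc k hk) (antitone_inv_shift_pow c hc k)
  have he : (fun n : ℕ => (1:ℝ) / ((n : ℝ) + c) ^ k - 1 / (((n + 1 : ℕ) : ℝ) + c) ^ k) =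
      (fun n : ℕ => 1 / ((n : ℝ) + c) ^ k - 1 / ((n : ℝ) + 1 + c) ^ k) := by
    funext n; push_cast; ring_nf
  rw [he] at h
  simpa using h

-- shift-2 telescope
lemma tele2 (k : ℕ) (hk : k ≠ 0) :
    HasSum (fun n : ℕ => 1 / ((n : ℝ) + 1 / 2) ^ k - 1 / ((n : ℝ) + 5 / 2) ^ k)
      (1 / (1 / 2 : ℝ) ^ k + 1 / (3 / 2 : ℝ) ^ k) := by
  have h1 := tele (1 / 2) (by norm_num) k hk
  have h2 := tele (3 / 2) (by norm_num) k hk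
  have h := h1.add h2
  have he : (fun n : ℕ =>
      ((1:ℝ) / ((n : ℝ) + 1 / 2) ^ k - 1 / ((n : ℝ) + 1 + 1 / 2) ^ k) +
      (1 / ((n : ℝ) + 3 / 2) ^ k - 1 / ((n : ℝ) + 1 + 3 / 2) ^ k)) =
      (fun n : ℕ => 1 / ((n : ℝ) + 1 / 2) ^ k - 1 / ((n : ℝ) + 5 / 2) ^ k) := by
    funext n
    have e1 : (n : ℝ) + 1 + 1 / 2 = (n : ℝ) + 3 / 2 := by ring
    have e2 : (n : ℝ) + 1 + 3 / 2 = (n : ℝ) + 5 / 2 := by ring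
    rw [e1, e2]; ring
  rwa [he] at h

-- shifted even-power sums
lemma hB4 : HasSum (fun t : ℕ => 1 / ((t : ℝ) + 3 / 2) ^ 4) (π ^ 4 / 6 - 16) := by
  have h := (hasSum_nat_add_iff' (f := fun t : ℕ => 1 / ((t : ℝ) + 1 / 2) ^ 4) 1).2 hS4
  have hval : π ^ 4 / 6 - ∑ i ∈ range 1, 1 / ((i : ℝ) + 1 / 2) ^ 4 = π ^ 4 / 6 - 16 := by
    rw [Finset.sum_range_one]; norm_num
  rw [hval] at h
  have he : (fun n : ℕ => (1:ℝ) / (((n + 1 : ℕ) : ℝ) + 1 / 2) ^ 4) =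
      (fun t : ℕ => 1 / ((t : ℝ) + 3 / 2) ^ 4) := by
    funext n; push_cast; ring_nf
  rwa [he] at h

lemma hC4 : HasSum (fun t : ℕ => 1 / ((t : ℝ) + 5 / 2) ^ 4) (π ^ 4 / 6 - 16 - 16 / 81) := by
  have h := (hasSum_nat_add_iff' (f := fun t : ℕ => 1 / ((t : ℝ) + 1 / 2) ^ 4) 2).2 hS4
  have hval : π ^ 4 / 6 - ∑ i ∈ range 2, 1 / ((i : ℝ) + 1 / 2) ^ 4 = π ^ 4 / 6 - 16 - 16 / 81 := by
    rw [Finset.sum_range_succ, Finset.sum_range_one]; norm_num; ring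
  rw [hval] at h
  have he : (fun n : ℕ => (1:ℝ) / (((n + 2 : ℕ) : ℝ) + 1 / 2) ^ 4) =
      (fun t : ℕ => 1 / ((t : ℝ) + 5 / 2) ^ 4) := by
    funext n; push_cast; ring_nf
  rwa [he] at h

lemma hQ2 : HasSum (fun t : ℕ => 1 / ((t : ℝ) + 3 / 2) ^ 2) (π ^ 2 / 2 - 4) := by
  have h := (hasSum_nat_add_iff' (f := fun t : ℕ => 1 / ((t : ℝ) + 1 / 2) ^ 2) 1).2 hS2
  have hval : π ^ 2 / 2 - ∑ i ∈ range 1, 1 / ((i : ℝ) + 1 / 2) ^ 2 = π ^ 2 / 2 - 4 := by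
    rw [Finset.sum_range_one]; norm_num
  rw [hval] at h
  have he : (fun n : ℕ => (1:ℝ) / (((n + 1 : ℕ) : ℝ) + 1 / 2) ^ 2) =
      (fun t : ℕ => 1 / ((t : ℝ) + 3 / 2) ^ 2) := by
    funext n; push_cast; ring_nf
  rwa [he] at h

lemma hR2 : HasSum (fun t : ℕ => 1 / ((t : ℝ) + 5 / 2) ^ 2) (π ^ 2 / 2 - 4 - 4 / 9) := by
  have h := (hasSum_nat_add_iff' (f := fun t : ℕ => 1 / ((t : ℝ) + 1 / 2) ^ 2) 2).2 hS2
  have hval : π ^ 2 / 2 - ∑ i ∈ range 2, 1 / ((i : ℝ) + 1 / 2) ^ 2 = π ^ 2 / 2 - 4 - 4 / 9 := by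
    rw [Finset.sum_range_succ, Finset.sum_range_one]; norm_num; ring
  rw [hval] at h
  have he : (fun n : ℕ => (1:ℝ) / (((n + 2 : ℕ) : ℝ) + 1 / 2) ^ 2) =
      (fun t : ℕ => 1 / ((t : ℝ) + 5 / 2) ^ 2) := by
    funext n; push_cast; ring_nf
  rwa [he] at h


theorem stmt15 :
    (∑' t : ℕ, 1 / (((t : ℝ) + 1) - 1 / 2) ^ 4) = Real.pi ^ 4 / 6 ∧
    (∑' t : ℕ,
        (128 / 3 : ℝ) * (((t : ℝ) + 1) - 1) * ((t : ℝ) + 1) * (((t : ℝ) + 1) + 1) *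
            (((t : ℝ) + 1) + 2) /
          ((((t : ℝ) + 1) - 1 / 2) ^ 4 * (((t : ℝ) + 1) + 1 / 2) ^ 4 *
            (((t : ℝ) + 1) + 3 / 2) ^ 4)) =
      (19 / 6 : ℝ) * Real.pi ^ 4 - (125 / 4 : ℝ) * Real.pi ^ 2 := by
  constructor
  · have he : (fun t : ℕ => 1 / (((t : ℝ) + 1) - 1 / 2) ^ 4) =
        (fun t : ℕ => 1 / ((t : ℝ) + 1 / 2) ^ 4) := by
      funext t; ring_nf
    rw [he]
    exact hS4.tsum_eq
  · have hcomb := (((((((hS4.mul_left (-5/2)).add (hB4.mul_left 24)).add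
      (hC4.mul_left (-5/2))).add (hS2.mul_left (-311/12))).add
      (hQ2.mul_left (-32/3))).add (hR2.mul_left (-311/12))).add
      ((tele2 3 (by norm_num)).mul_left (37/3))).add
      ((tele2 1 (by norm_num)).mul_left (125/4))
    have hfun : (fun t : ℕ =>
        (-5/2) * (1 / ((t : ℝ) + 1 / 2) ^ 4) + 24 * (1 / ((t : ℝ) + 3 / 2) ^ 4) +
        (-5/2) * (1 / ((t : ℝ) + 5 / 2) ^ 4) + (-311/12) * (1 / ((t : ℝ) + 1 / 2) ^ 2) +
        (-32/3) * (1 / ((t : ℝ) + 3 / 2) ^ 2) + (-311/12) * (1 / ((t : ℝ) + 5 / 2) ^ 2) +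
        (37/3) * (1 / ((t : ℝ) + 1 / 2) ^ 3 - 1 / ((t : ℝ) + 5 / 2) ^ 3) +
        (125/4) * (1 / ((t : ℝ) + 1 / 2) ^ 1 - 1 / ((t : ℝ) + 5 / 2) ^ 1)) =
        (fun t : ℕ =>
        (128 / 3 : ℝ) * (((t : ℝ) + 1) - 1) * ((t : ℝ) + 1) * (((t : ℝ) + 1) + 1) *
            (((t : ℝ) + 1) + 2) /
          ((((t : ℝ) + 1) - 1 / 2) ^ 4 * (((t : ℝ) + 1) + 1 / 2) ^ 4 *
            (((t : ℝ) + 1) + 3 / 2) ^ 4)) := by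
      funext t
      have h1 : (t : ℝ) + 1 / 2 ≠ 0 := by positivity
      have h2 : (t : ℝ) + 3 / 2 ≠ 0 := by positivity
      have h3 : (t : ℝ) + 5 / 2 ≠ 0 := by positivity
      have e1 : ((t : ℝ) + 1) - 1 / 2 = (t : ℝ) + 1 / 2 := by ring
      have e2 : ((t : ℝ) + 1) + 1 / 2 = (t : ℝ) + 3 / 2 := by ring
      have e3 : ((t : ℝ) + 1) + 3 / 2 = (t : ℝ) + 5 / 2 := by ring
      rw [e1, e2, e3]
      field_simp
      ring
    rw [hfun] at hcomb
    have hval : (-5/2) * (π ^ 4 / 6) + 24 * (π ^ 4 / 6 - 16) +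
        (-5/2) * (π ^ 4 / 6 - 16 - 16 / 81) + (-311/12) * (π ^ 2 / 2) +
        (-32/3) * (π ^ 2 / 2 - 4) + (-311/12) * (π ^ 2 / 2 - 4 - 4 / 9) +
        (37/3) * (1 / (1 / 2 : ℝ) ^ 3 + 1 / (3 / 2 : ℝ) ^ 3) +
        (125/4) * (1 / (1 / 2 : ℝ) ^ 1 + 1 / (3 / 2 : ℝ) ^ 1) =
        (19 / 6 : ℝ) * π ^ 4 - (125 / 4 : ℝ) * π ^ 2 := by
      norm_num
      ring
    rw [hval] at hcomb
    exact hcomb.tsum_eq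
end
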